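/- Let B = curl A be a Beltrami field on Ω ⊆ ℝ³ with constant λ, and define the Noether energy-momentum tensor θ^i_j = (B_l - (λ/2)A_l) ε^{lik} ∂_j A_k - δ^i_j ((1/2)‖B‖² - (λ/2)A·B). Then ∂_i θ^i_j = (-curl B + λB)^k ∂_j A_k, and hence ∂_i θ^i_j = 0 for every solution of curl B = λ B. -/

import Mathlib

open MeasureTheory

/-- Partial derivative `∂ᵢ f` on `ℝ³`. -/
noncomputable def pd (i : Fin 3) (f : (Fin 3 → ℝ) → ℝ) (x : Fin 3 → ℝ) : ℝ :=
  fderiv ℝ f x (Pi.single i 1)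

/-- Gradient on `ℝ³`. -/
noncomputable def vgrad (f : (Fin 3 → ℝ) → ℝ) (x : Fin 3 → ℝ) : Fin 3 → ℝ :=
  fun i => pd i f x

/-- Divergence on `ℝ³`. -/
noncomputable def vdiv (B : (Fin 3 → ℝ) → (Fin 3 → ℝ)) (x : Fin 3 → ℝ) : ℝ :=
  ∑ i, pd i (fun y => B y i) x

/-- Curl on `ℝ³`. -/
noncomputable def vcurl (B : (Fin 3 → ℝ) → (Fin 3 → ℝ)) (x : Fin 3 → ℝ) : Fin 3 → ℝ :=
  ![pd 1 (fun y => B y 2) x - pd 2 (fun y => B y 1) x,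
    pd 2 (fun y => B y 0) x - pd 0 (fun y => B y 2) x,
    pd 0 (fun y => B y 1) x - pd 1 (fun y => B y 0) x]

/-- Euclidean dot product on `ℝ³`. -/
def dot3 (u v : Fin 3 → ℝ) : ℝ := ∑ i, u i * v i

/-- Cross product on `ℝ³`. -/
def cross3 (u v : Fin 3 → ℝ) : Fin 3 → ℝ :=
  ![u 1 * v 2 - u 2 * v 1, u 2 * v 0 - u 0 * v 2, u 0 * v 1 - u 1 * v 0]

/-- Levi-Civita symbol on three indices. -/
noncomputable def eps3 (i j k : Fin 3) : ℝ :=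
  ((j.val : ℝ) - i.val) * ((k.val : ℝ) - j.val) * ((k.val : ℝ) - i.val) / 2

/-- Noether energy-momentum tensor
`θ^i_j = (B_l - (λ/2)A_l) ε^{lik} ∂_j A_k - δ^i_j ((1/2)‖B‖² - (λ/2)A·B)`
with `B = curl A`. -/
noncomputable def theta3 (lam : ℝ) (A : (Fin 3 → ℝ) → (Fin 3 → ℝ))
    (x : Fin 3 → ℝ) (i j : Fin 3) : ℝ :=
  (∑ l, ∑ k, (vcurl A x l - (lam/2) * A x l) * eps3 l i k * pd j (fun y => A y k) x)
    - (if i = j then (1:ℝ) else 0) *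
        ((1/2) * dot3 (vcurl A x) (vcurl A x) - (lam/2) * dot3 (A x) (vcurl A x))

section helpers

variable {f g : (Fin 3 → ℝ) → ℝ} {x : Fin 3 → ℝ} {i : Fin 3} {c : ℝ}

theorem pd_add (hf : DifferentiableAt ℝ f x) (hg : DifferentiableAt ℝ g x) :
    pd i (fun y => f y + g y) x = pd i f x + pd i g x := by
  simp [pd, fderiv_fun_add hf hg]

theorem pd_sub (hf : DifferentiableAt ℝ f x) (hg : DifferentiableAt ℝ g x) :
    pd i (fun y => f y - g y) x = pd i f x - pd i g x := by
  simp [pd, fderiv_fun_sub hf hg]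

theorem pd_mul (hf : DifferentiableAt ℝ f x) (hg : DifferentiableAt ℝ g x) :
    pd i (fun y => f y * g y) x = pd i f x * g x + f x * pd i g x := by
  simp [pd, fderiv_fun_mul hf hg]; ring

theorem pd_const : pd i (fun _ => c) x = 0 := by simp [pd]

theorem pd_const_mul (hf : DifferentiableAt ℝ f x) :
    pd i (fun y => c * f y) x = c * pd i f x := by
  simp [pd, fderiv_const_mul hf]

theorem pd_neg : pd i (fun y => -f y) x = -pd i f x := by
  simp [pd, fderiv_neg]

theorem pd_sq (hf : DifferentiableAt ℝ f x) :
    pd i (fun y => f y ^ 2) x = 2 * f x * pd i f x := by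
  have : pd i (fun y => f y * f y) x = pd i f x * f x + f x * pd i f x := pd_mul hf hf
  simp only [← sq] at this
  rw [this]; ring

theorem contDiff_pd (h2 : ContDiff ℝ 2 f) (m : Fin 3) :
    ContDiff ℝ 1 (fun y => pd m f y) := by
  unfold pd
  exact (h2.fderiv_right (by norm_num : (1:WithTop ℕ∞) + 1 ≤ 2)).clm_apply contDiff_const

theorem pd_pd_symm (h2 : ContDiff ℝ 2 f) (i m : Fin 3) (x : Fin 3 → ℝ) :
    pd i (fun y => pd m f y) x = pd m (fun y => pd i f y) x := by
  have h1 : ∀ y, HasFDerivAt f (fderiv ℝ f y) y := fun y =>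
    ((h2.differentiable (by norm_num)) y).hasFDerivAt
  have hd : DifferentiableAt ℝ (fderiv ℝ f) x :=
    ((h2.fderiv_right (by norm_num : (1:WithTop ℕ∞) + 1 ≤ 2)).differentiable (by norm_num)) x
  have hsym := second_derivative_symmetric h1 hd.hasFDerivAt
  have key : ∀ (v w : Fin 3 → ℝ), fderiv ℝ (fun y => fderiv ℝ f y w) x v
      = (fderiv ℝ (fderiv ℝ f) x v) w := by
    intro v w
    rw [fderiv_clm_apply hd (differentiableAt_const w)]
    simp
  unfold pd
  rw [key, key, hsym]

end helpers

set_option maxHeartbeats 4000000 in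
theorem key_div (A : (Fin 3 → ℝ) → (Fin 3 → ℝ)) (lam : ℝ) (hA : ContDiff ℝ 2 A)
    (x : Fin 3 → ℝ) (j : Fin 3) :
    ∑ i, pd i (fun y => theta3 lam A y i j) x =
      ∑ k, (-(vcurl (vcurl A) x k) + lam * vcurl A x k) * pd j (fun y => A y k) x := by
  have hC2 : ∀ k, ContDiff ℝ 2 (fun y => A y k) := contDiff_pi.1 hA
  have hD : ∀ k, Differentiable ℝ (fun y => A y k) := fun k =>
    (hC2 k).differentiable (by norm_num)
  have hP : ∀ m k : Fin 3, Differentiable ℝ (fun y => pd m (fun z => A z k) y) := fun m k =>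
    (contDiff_pd (hC2 k) m).differentiable (by norm_num)
  have hD0 := hD 0; have hD1 := hD 1; have hD2 := hD 2
  have h00 := hP 0 0; have h01 := hP 0 1; have h02 := hP 0 2
  have h10 := hP 1 0; have h11 := hP 1 1; have h12 := hP 1 2
  have h20 := hP 2 0; have h21 := hP 2 1; have h22 := hP 2 2
  have hs10 : ∀ k x, pd 1 (fun y => pd 0 (fun z => A z k) y) x
      = pd 0 (fun y => pd 1 (fun z => A z k) y) x := fun k x => pd_pd_symm (hC2 k) 1 0 x
  have hs20 : ∀ k x, pd 2 (fun y => pd 0 (fun z => A z k) y) x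
      = pd 0 (fun y => pd 2 (fun z => A z k) y) x := fun k x => pd_pd_symm (hC2 k) 2 0 x
  have hs21 : ∀ k x, pd 2 (fun y => pd 1 (fun z => A z k) y) x
      = pd 1 (fun y => pd 2 (fun z => A z k) y) x := fun k x => pd_pd_symm (hC2 k) 2 1 x
  fin_cases j <;>
  · simp [theta3, vcurl, dot3, eps3, Fin.sum_univ_three]
    simp (disch := fun_prop) only [pd_add, pd_sub, pd_mul, pd_const_mul, pd_neg, pd_const, pd_sq]
    simp only [hs10, hs20, hs21]
    ring

theorem stmt10 (A : (Fin 3 → ℝ) → (Fin 3 → ℝ)) (lam : ℝ) (hA : ContDiff ℝ 2 A) :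
    (∀ x, ∀ j : Fin 3, ∑ i, pd i (fun y => theta3 lam A y i j) x =
      ∑ k, (-(vcurl (vcurl A) x k) + lam * vcurl A x k) * pd j (fun y => A y k) x) ∧
    ((∀ x, vcurl (vcurl A) x = lam • vcurl A x) →
      ∀ x, ∀ j : Fin 3, ∑ i, pd i (fun y => theta3 lam A y i j) x = 0) := by
  refine ⟨fun x j => key_div A lam hA x j, fun hB x j => ?_⟩
  rw [key_div A lam hA x j]
  apply Finset.sum_eq_zero
  intro k _
  rw [hB x]
  simp
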